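/- arXiv:1204.0495 — 2 statements merged into one kernel-verified Lean document; each statement's English description precedes it below -/
import Mathlib

section
/- Let H be a connected finite simple graph of order n ≥ 2. Then dim_s(H) ≤ n − ϖ(H). -/
open SimpleGraph

/-- A vertex `w` strongly resolves the pair `u`, `v` if `v` lies on some shortest `u`–`w`
path or `u` lies on some shortest `v`–`w` path. -/
def StronglyResolves {V : Type*} (G : SimpleGraph V) (w u v : V) : Prop :=
  G.dist u w = G.dist u v + G.dist v w ∨ G.dist v w = G.dist v u + G.dist u w

/-- `S` is a strong resolving set for `G` if every pair of distinct vertices is strongly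
resolved by some vertex of `S`. -/
def IsStrongResolvingSet {V : Type*} (G : SimpleGraph V) (S : Set V) : Prop :=
  ∀ u v : V, u ≠ v → ∃ w ∈ S, StronglyResolves G w u v

/-- The strong metric dimension: the minimum cardinality of a strong resolving set. -/
noncomputable def strongDim {V : Type*} (G : SimpleGraph V) [Fintype V] : ℕ :=
  sInf {k | ∃ S : Finset V, IsStrongResolvingSet G ↑S ∧ S.card = k}

/-- The closed neighborhood of a vertex. -/
def closedNbhd {V : Type*} (G : SimpleGraph V) (v : V) : Set V :=
  insert v (G.neighborSet v)

/-- A twin-free clique: a clique containing no pair of true twins. -/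
def IsTwinFreeClique {V : Type*} (G : SimpleGraph V) (X : Finset V) : Prop :=
  G.IsClique ↑X ∧ ∀ u ∈ X, ∀ v ∈ X, u ≠ v → closedNbhd G u ≠ closedNbhd G v

/-- The twin-free clique number: maximum cardinality of a twin-free clique. -/
noncomputable def twinFreeCliqueNum {V : Type*} (G : SimpleGraph V) [Fintype V] : ℕ :=
  sSup {k | ∃ X : Finset V, IsTwinFreeClique G X ∧ X.card = k}

/-- Adjacency relation of the join of two graphs. -/
def joinAdj {V W : Type*} (G : SimpleGraph V) (H : SimpleGraph W) :
    V ⊕ W → V ⊕ W → Prop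
  | Sum.inl a, Sum.inl b => G.Adj a b
  | Sum.inr a, Sum.inr b => H.Adj a b
  | Sum.inl _, Sum.inr _ => True
  | Sum.inr _, Sum.inl _ => True

/-- The join `G + H`: disjoint union of `G` and `H` plus all edges between them. -/
def joinGraph {V W : Type*} (G : SimpleGraph V) (H : SimpleGraph W) :
    SimpleGraph (V ⊕ W) where
  Adj := joinAdj G H
  symm := ⟨by
    rintro (a | a) (b | b) h
    · exact G.adj_symm h
    · trivial
    · trivial
    · exact H.adj_symm h⟩
  loopless := ⟨by
    rintro (a | a) h
    · exact G.loopless.irrefl a h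
    · exact H.loopless.irrefl a h⟩

/-- Adjacency relation of the corona product `G ⊙ H`. -/
def coronaAdj {V W : Type*} (G : SimpleGraph V) (H : SimpleGraph W) :
    V ⊕ V × W → V ⊕ V × W → Prop
  | Sum.inl a, Sum.inl b => G.Adj a b
  | Sum.inr p, Sum.inr q => p.1 = q.1 ∧ H.Adj p.2 q.2
  | Sum.inl a, Sum.inr q => a = q.1
  | Sum.inr p, Sum.inl b => p.1 = b

/-- The corona product `G ⊙ H`: one copy of `G` and one copy of `H` for each vertex of
`G`, with the `i`-th vertex of `G` joined to every vertex of the `i`-th copy of `H`. -/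
def corona {V W : Type*} (G : SimpleGraph V) (H : SimpleGraph W) :
    SimpleGraph (V ⊕ V × W) where
  Adj := coronaAdj G H
  symm := ⟨by
    rintro (a | p) (b | q) h
    · exact G.adj_symm h
    · exact h.symm
    · exact h.symm
    · exact ⟨h.1.symm, H.adj_symm h.2⟩⟩
  loopless := ⟨by
    rintro (a | p) h
    · exact G.loopless.irrefl a h
    · exact H.loopless.irrefl p.2 h.2⟩

/-- The disjoint union of copies of `H`, one copy for each element of `V`. -/
def copies (V : Type*) {W : Type*} (H : SimpleGraph W) : SimpleGraph (V × W) where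
  Adj p q := p.1 = q.1 ∧ H.Adj p.2 q.2
  symm := ⟨fun _ _ h => ⟨h.1.symm, h.2.symm⟩⟩
  loopless := ⟨fun p h => H.loopless.irrefl p.2 h.2⟩

/-- The algebraic connectivity: the second smallest eigenvalue (with multiplicity,
in nondecreasing order) of the Laplacian matrix. -/
noncomputable def algebraicConnectivity {V : Type*} (G : SimpleGraph V) [Fintype V]
    [DecidableEq V] [DecidableRel G.Adj] : ℝ :=
  (((Finset.univ.val.map ((G.posSemidef_lapMatrix ℝ).isHermitian.eigenvalues)).sort
    (· ≤ ·)).getD 1 0)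

private lemma keyResolve {V : Type*} {H : SimpleGraph V} (hconn : H.Connected)
    {u v w : V} (hadj : H.Adj u v) (hwu : w ∈ closedNbhd H u) (hwv : w ∉ closedNbhd H v) :
    H.dist v w = H.dist v u + H.dist u w := by
  have hwv' : w ≠ v := fun h => hwv (by simp [closedNbhd, h])
  have hnadj : ¬ H.Adj v w := fun h => hwv (by simp [closedNbhd, SimpleGraph.mem_neighborSet, h])
  have hwu' : w ≠ u := by
    rintro rfl
    exact hwv (by simp [closedNbhd, SimpleGraph.mem_neighborSet, hadj.symm])
  have hadjuw : H.Adj u w := by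
    rcases hwu with h | h
    · exact absurd h hwu'
    · exact (SimpleGraph.mem_neighborSet _ _ _).1 h
  have h1 : H.dist v u = 1 := SimpleGraph.dist_eq_one_iff_adj.2 hadj.symm
  have h2 : H.dist u w = 1 := SimpleGraph.dist_eq_one_iff_adj.2 hadjuw
  have hle : H.dist v w ≤ 2 := by
    have := hconn.dist_triangle (u := v) (v := u) (w := w)
    omega
  have hne0 : H.dist v w ≠ 0 := fun h => hwv' ((hconn.dist_eq_zero_iff).1 h).symm
  have hne1 : H.dist v w ≠ 1 := fun h => hnadj (SimpleGraph.dist_eq_one_iff_adj.1 h)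
  omega

/-- Let `H` be a connected finite simple graph of order `n ≥ 2`.
Then `dim_s(H) ≤ n − ϖ(H)`. -/
theorem strongDim_le_card_sub_twinFreeCliqueNum {V : Type*} [Fintype V]
    (H : SimpleGraph V) (hconn : H.Connected) (hn : 2 ≤ Fintype.card V) :
    strongDim H ≤ Fintype.card V - twinFreeCliqueNum H := by
  classical
  set T := {k | ∃ X : Finset V, IsTwinFreeClique H X ∧ X.card = k} with hT
  have hne : T.Nonempty := ⟨0, ∅, ⟨by simp, by simp⟩, rfl⟩
  have hbdd : BddAbove T := ⟨Fintype.card V, by rintro k ⟨X, _, rfl⟩; exact X.card_le_univ⟩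
  obtain ⟨X, hX, hcard⟩ : twinFreeCliqueNum H ∈ T := Nat.sSup_mem hne hbdd
  have hres : IsStrongResolvingSet H ↑(Xᶜ : Finset V) := by
    intro u v huv
    by_cases hu : u ∈ X
    · by_cases hv : v ∈ X
      · have hadj : H.Adj u v := hX.1 (by simpa using hu) (by simpa using hv) huv
        have hnbhd := hX.2 u hu v hv huv
        have hex : ∃ w, ¬ (w ∈ closedNbhd H u ↔ w ∈ closedNbhd H v) :=
          not_forall.1 fun h => hnbhd (Set.ext h)
        obtain ⟨w, hw⟩ := hex
        have hcase : (w ∈ closedNbhd H u ∧ w ∉ closedNbhd H v) ∨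
            (w ∈ closedNbhd H v ∧ w ∉ closedNbhd H u) := by tauto
        have hwX : ∀ x : V, x ∈ X → w ∉ closedNbhd H x → w ∈ (Xᶜ : Finset V) := by
          intro x hx hwx
          simp only [Finset.mem_compl]
          intro hwmem
          by_cases hwx' : w = x
          · exact hwx (by simp [closedNbhd, hwx'])
          · have : H.Adj x w := hX.1 (by simpa using hx) (by simpa using hwmem)
              (fun h => hwx' h.symm)
            exact hwx (by simp [closedNbhd, SimpleGraph.mem_neighborSet, this])
        rcases hcase with ⟨h1, h2⟩ | ⟨h1, h2⟩
        · exact ⟨w, by simpa using hwX v hv h2, Or.inr (keyResolve hconn hadj h1 h2)⟩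
        · exact ⟨w, by simpa using hwX u hu h2, Or.inl (keyResolve hconn hadj.symm h1 h2)⟩
      · refine ⟨v, by simpa using hv, Or.inl ?_⟩
        simp
    · refine ⟨u, by simpa using hu, Or.inr ?_⟩
      simp
  have hmem : (Xᶜ : Finset V).card ∈ {k | ∃ S : Finset V, IsStrongResolvingSet H ↑S ∧ S.card = k} :=
    ⟨Xᶜ, hres, rfl⟩
  have := Nat.sInf_le hmem
  rwa [Finset.card_compl, hcard] at this
end

section
/- Let H be a connected finite simple graph of diameter two, order n ≥ 2, maximum degree Δ, and algebraic connectivity μ (the second smallest eigenvalue of the Laplacian matrix of H, with eigenvalues listed in nondecreasing order with multiplicity). Then dim_s(H) ≥ ⌈n(n − Δ − 1)/(n − μ)⌉. -/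
open SimpleGraph

section Aux
open Matrix Finset

variable {V : Type*} [Fintype V] [DecidableEq V]

lemma dot_eq_sum_repr {A : Matrix V V ℝ} (hA : A.IsHermitian) (x y : V → ℝ) :
    x ⬝ᵥ y = ∑ i, hA.eigenvectorBasis.repr ((WithLp.equiv 2 (V → ℝ)).symm x) i *
      hA.eigenvectorBasis.repr ((WithLp.equiv 2 (V → ℝ)).symm y) i := by
  have h1 : x ⬝ᵥ y = inner ℝ ((WithLp.equiv 2 (V → ℝ)).symm x) ((WithLp.equiv 2 (V → ℝ)).symm y) := by
    simp only [PiLp.inner_apply, RCLike.inner_apply, conj_trivial]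
    simp [dotProduct, mul_comm]
  rw [h1, ← hA.eigenvectorBasis.repr.inner_map_map]
  simp only [PiLp.inner_apply, RCLike.inner_apply, conj_trivial]
  exact Finset.sum_congr rfl fun _ _ => mul_comm _ _

lemma repr_mulVec {A : Matrix V V ℝ} (hA : A.IsHermitian) (x : V → ℝ) (i : V) :
    hA.eigenvectorBasis.repr ((WithLp.equiv 2 (V → ℝ)).symm (A *ᵥ x)) i
      = hA.eigenvalues i * hA.eigenvectorBasis.repr ((WithLp.equiv 2 (V → ℝ)).symm x) i := by
  rw [OrthonormalBasis.repr_apply_apply, OrthonormalBasis.repr_apply_apply]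
  have h1 : (inner ℝ (hA.eigenvectorBasis i) ((WithLp.equiv 2 (V → ℝ)).symm (A *ᵥ x)) : ℝ)
      = (WithLp.equiv 2 (V → ℝ)) (hA.eigenvectorBasis i) ⬝ᵥ (A *ᵥ x) := by
    simp only [PiLp.inner_apply, RCLike.inner_apply, conj_trivial]; simp [dotProduct, mul_comm]
  have h2 : (inner ℝ (hA.eigenvectorBasis i) ((WithLp.equiv 2 (V → ℝ)).symm x) : ℝ)
      = (WithLp.equiv 2 (V → ℝ)) (hA.eigenvectorBasis i) ⬝ᵥ x := by
    simp only [PiLp.inner_apply, RCLike.inner_apply, conj_trivial]; simp [dotProduct, mul_comm]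
  have hT : Aᵀ = A := by
    rw [← conjTranspose_eq_transpose_of_trivial]; exact hA
  rw [h1, h2, dotProduct_mulVec, ← mulVec_transpose, hT, WithLp.equiv_apply, hA.mulVec_eigenvectorBasis,
    smul_dotProduct]
  rfl

lemma countP_lt_getD_one (l : List ℝ) (hs : l.Pairwise (· ≤ ·)) :
    l.countP (fun x => decide (x < l.getD 1 0)) ≤ 1 := by
  match l with
  | [] => simp
  | [a] => simp only [List.countP_cons, List.countP_nil]; split <;> simp
  | a :: b :: t =>
      have hb : ∀ x ∈ t, b ≤ x := fun x hx => (List.pairwise_cons.mp (List.pairwise_cons.mp hs).2).1 x hx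
      have hgd : (a :: b :: t).getD 1 0 = b := rfl
      rw [hgd]
      have ht : t.countP (fun x => decide (x < b)) = 0 :=
        List.countP_eq_zero.mpr (fun x hx => by simpa using not_lt.mpr (hb x hx))
      rw [List.countP_cons, List.countP_cons, ht]
      simp only [decide_eq_true_eq, lt_irrefl, if_false]
      split <;> simp

lemma alg_conn_rayleigh (H : SimpleGraph V) [DecidableRel H.Adj]
    (hcard : 2 ≤ Fintype.card V) (y : V → ℝ) (hy : ∑ v, y v = 0) :
    algebraicConnectivity H * (∑ v, y v ^ 2) ≤ y ⬝ᵥ (H.lapMatrix ℝ *ᵥ y) := by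
  classical
  set A := H.lapMatrix ℝ with hAdef
  have hPSD : A.PosSemidef := H.posSemidef_lapMatrix ℝ
  set hA := hPSD.isHermitian with hhA
  set B := hA.eigenvectorBasis with hB
  set lam := hA.eigenvalues with hlam
  set c : V → ℝ := fun i => B.repr ((WithLp.equiv 2 (V → ℝ)).symm y) i with hc
  set μ := algebraicConnectivity H with hμ
  have hquad : y ⬝ᵥ (A *ᵥ y) = ∑ i, lam i * c i ^ 2 := by
    rw [dot_eq_sum_repr hA]
    refine Finset.sum_congr rfl fun i _ => ?_
    rw [repr_mulVec hA]
    ring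
  have hnorm : ∑ v, y v ^ 2 = ∑ i, c i ^ 2 := by
    have := dot_eq_sum_repr hA y y
    simp only [dotProduct] at this
    simp only [← sq] at this
    rw [this]
  have hpos : (0:ℝ) ≤ y ⬝ᵥ (A *ᵥ y) := by
    have := hPSD.dotProduct_mulVec_nonneg y
    simpa using this
  -- the sorted list
  set l := ((Finset.univ.val.map lam).sort (· ≤ ·)) with hldef
  have hμl : μ = l.getD 1 0 := rfl
  have hlsort : l.Pairwise (· ≤ ·) := Multiset.pairwise_sort _ _
  have hmem : ∀ i, lam i ∈ l := by
    intro i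
    rw [Multiset.mem_sort (α := ℝ)]
    exact Multiset.mem_map_of_mem _ (mem_univ i)
  -- uniqueness of small eigenvalues
  have huniq : ∀ i i', lam i < μ → lam i' < μ → i = i' := by
    intro i i' hi hi'
    by_contra hne
    have hcount : Multiset.countP (fun x => x < μ) (Finset.univ.val.map lam) ≤ 1 := by
      have he : (Finset.univ.val.map lam) = (l : Multiset ℝ) := (Multiset.sort_eq _ _).symm
      rw [he, Multiset.coe_countP]
      exact hμl ▸ countP_lt_getD_one l hlsort
    have h2 : 2 ≤ Multiset.countP (fun x => x < μ) (Finset.univ.val.map lam) := by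
      rw [Multiset.countP_map]
      have hsub : ({i, i'} : Finset V) ⊆ Finset.univ.filter (fun a => lam a < μ) := by
        intro z hz
        simp only [Finset.mem_insert, Finset.mem_singleton] at hz
        rcases hz with rfl | rfl <;> simp [hi, hi']
      calc 2 = ({i, i'} : Finset V).card := (Finset.card_pair hne).symm
        _ ≤ (Finset.univ.filter (fun a => lam a < μ)).card := Finset.card_le_card hsub
        _ = Multiset.card (Multiset.filter (fun a => lam a < μ) Finset.univ.val) := rfl
    omega
  -- constant vector
  set one : V → ℝ := fun _ => 1 with hone
  set d : V → ℝ := fun i => B.repr ((WithLp.equiv 2 (V → ℝ)).symm one) i with hd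
  have hld : ∀ i, lam i * d i = 0 := by
    intro i
    have h0 : A *ᵥ one = 0 := H.lapMatrix_mulVec_const_eq_zero
    have h1 := repr_mulVec hA one i
    rw [h0] at h1
    exact h1.symm.trans (by simp)
  have hone_ne : ∃ j, d j ≠ 0 := by
    by_contra h
    push_neg at h
    have hr : B.repr ((WithLp.equiv 2 (V → ℝ)).symm one) = 0 := by
      ext i
      exact h i
    have h0 : (WithLp.equiv 2 (V → ℝ)).symm one = 0 := by
      have := B.repr.map_eq_zero_iff.mp hr
      exact this
    have : Nonempty V := Fintype.card_pos_iff.mp (by omega)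
    obtain ⟨v⟩ := this
    have : one v = 0 := congrFun congr(((WithLp.equiv 2 (V → ℝ))) $h0) v
    simp [hone] at this
  obtain ⟨j, hdj⟩ := hone_ne
  have hlamj : lam j = 0 := by
    rcases mul_eq_zero.mp (hld j) with h | h
    · exact h
    · exact absurd h hdj
  rcases le_or_gt μ 0 with hμ0 | hμ0
  · calc μ * ∑ v, y v ^ 2 ≤ 0 :=
        mul_nonpos_of_nonpos_of_nonneg hμ0 (Finset.sum_nonneg fun i _ => sq_nonneg _)
      _ ≤ _ := hpos
  · have hjlt : lam j < μ := by rw [hlamj]; exact hμ0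
    have hcj : c j = 0 := by
      have hdot : one ⬝ᵥ y = 0 := by simpa [dotProduct, hone] using hy
      have hexp : one ⬝ᵥ y = ∑ i, d i * c i := dot_eq_sum_repr hA one y
      have hsingle : ∑ i, d i * c i = d j * c j := by
        apply Finset.sum_eq_single j
        · intro i _ hij
          have hdi : d i = 0 := by
            by_contra hne
            have hlami : lam i = 0 := by
              rcases mul_eq_zero.mp (hld i) with h | h
              · exact h
              · exact absurd h hne
            exact hij (huniq i j (by rw [hlami]; exact hμ0) hjlt)
          rw [hdi, zero_mul]
        · intro h; exact absurd (Finset.mem_univ j) h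
      have hz : d j * c j = 0 := by rw [← hsingle, ← hexp, hdot]
      rcases mul_eq_zero.mp hz with h | h
      · exact absurd h hdj
      · exact h
    rw [hquad, hnorm, Finset.mul_sum]
    apply Finset.sum_le_sum
    intro i _
    by_cases hij : i = j
    · subst hij; rw [hcj]; simp
    · have hge : ¬ lam i < μ := fun hlt => hij (huniq i j hlt hjlt)
      exact mul_le_mul_of_nonneg_right (not_lt.mp hge) (sq_nonneg _)

lemma erase_is_srs (G : SimpleGraph V) (v₀ : V) :
    IsStrongResolvingSet G ↑(Finset.univ.erase v₀) := by
  intro u v huv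
  by_cases hu : u = v₀
  · refine ⟨v, Finset.mem_coe.mpr (Finset.mem_erase.mpr ⟨fun h => huv (hu.trans h.symm), Finset.mem_univ v⟩), ?_⟩
    left
    simp [SimpleGraph.dist_self]
  · refine ⟨u, Finset.mem_coe.mpr (Finset.mem_erase.mpr ⟨hu, Finset.mem_univ u⟩), ?_⟩
    right
    simp [SimpleGraph.dist_self]

lemma exists_min_srs (G : SimpleGraph V) [Nonempty V] :
    ∃ S : Finset V, IsStrongResolvingSet G ↑S ∧ S.card = strongDim G ∧
      S.card < Fintype.card V := by
  classical
  obtain ⟨v₀⟩ := ‹Nonempty V›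
  have hmem : (Finset.univ.erase v₀).card ∈
      {k | ∃ S : Finset V, IsStrongResolvingSet G ↑S ∧ S.card = k} :=
    ⟨_, erase_is_srs G v₀, rfl⟩
  have hne : {k | ∃ S : Finset V, IsStrongResolvingSet G ↑S ∧ S.card = k}.Nonempty := ⟨_, hmem⟩
  obtain ⟨S, hS, hcard⟩ := Nat.sInf_mem hne
  refine ⟨S, hS, hcard, ?_⟩
  rw [hcard]
  calc strongDim G ≤ (Finset.univ.erase v₀).card := Nat.sInf_le hmem
    _ < Fintype.card V := by
        rw [Finset.card_erase_of_mem (Finset.mem_univ v₀), Finset.card_univ]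
        have : 0 < Fintype.card V := Fintype.card_pos
        omega

lemma compl_srs_clique (H : SimpleGraph V) (hconn : H.Connected) (hdiam : H.diam = 2)
    (S : Finset V) (hS : IsStrongResolvingSet H ↑S) :
    ∀ u ∈ Sᶜ, ∀ v ∈ Sᶜ, u ≠ v → H.Adj u v := by
  intro u hu v hv huv
  obtain ⟨w, hwS, hw⟩ := hS u v huv
  have hnetop : H.ediam ≠ ⊤ := SimpleGraph.ediam_ne_top_of_diam_ne_zero (by omega)
  have hle : ∀ a b : V, H.dist a b ≤ 2 := fun a b => hdiam ▸ SimpleGraph.dist_le_diam hnetop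
  by_contra hadj
  have h2 : H.dist u v = 2 := by
    have h1 : H.dist u v ≠ 1 := fun h => hadj (SimpleGraph.dist_eq_one_iff_adj.mp h)
    have h0 : 0 < H.dist u v := hconn.pos_dist_of_ne huv
    have := hle u v
    omega
  have hwu : w ≠ u := fun h => (Finset.mem_compl.mp hu) (h ▸ hwS)
  have hwv : w ≠ v := fun h => (Finset.mem_compl.mp hv) (h ▸ hwS)
  rcases hw with h | h
  · have h3 : 0 < H.dist v w := hconn.pos_dist_of_ne (Ne.symm hwv)
    have := hle u w
    rw [h, h2] at this
    omega
  · have h3 : 0 < H.dist u w := hconn.pos_dist_of_ne (Ne.symm hwu)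
    have h4 : H.dist v u = 2 := by rw [SimpleGraph.dist_comm]; exact h2
    have := hle v w
    rw [h, h4] at this
    omega


lemma sdiff_card_bound (H : SimpleGraph V) [DecidableRel H.Adj] (C : Finset V)
    (hclique : ∀ u ∈ C, ∀ v ∈ C, u ≠ v → H.Adj u v) (i : V) (hi : i ∈ C) :
    C.card + ((H.neighborFinset i) \ C).card ≤ H.maxDegree + 1 := by
  have hsub : C.erase i ⊆ (H.neighborFinset i) ∩ C := by
    intro z hz
    obtain ⟨hzi, hzC⟩ := Finset.mem_erase.mp hz
    exact Finset.mem_inter.mpr ⟨(H.mem_neighborFinset i z).mpr ((H.adj_comm z i).mp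
      (hclique z hzC i hi hzi)), hzC⟩
  have h1 : C.card - 1 ≤ ((H.neighborFinset i) ∩ C).card := by
    have := Finset.card_le_card hsub
    rwa [Finset.card_erase_of_mem hi] at this
  have h2 : ((H.neighborFinset i) ∩ C).card + ((H.neighborFinset i) \ C).card
      = H.degree i := by
    rw [Finset.card_inter_add_card_sdiff]
    rfl
  have h3 : H.degree i ≤ H.maxDegree := H.degree_le_maxDegree i
  have hCpos : 1 ≤ C.card := Finset.card_pos.mpr ⟨i, hi⟩
  omega

lemma quad_sum_le (H : SimpleGraph V) [DecidableRel H.Adj] (C : Finset V)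
    (hclique : ∀ u ∈ C, ∀ v ∈ C, u ≠ v → H.Adj u v) (y : V → ℝ)
    (hy1 : ∀ v ∈ C, y v = (Fintype.card V : ℝ) - C.card)
    (hy2 : ∀ v ∉ C, y v = -(C.card : ℝ)) :
    (∑ i : V, ∑ j : V, if H.Adj i j then (y i - y j)^2 else 0)
      ≤ 2 * (Fintype.card V : ℝ)^2 * C.card * ((H.maxDegree : ℝ) + 1 - C.card) := by
  classical
  set n : ℝ := (Fintype.card V : ℝ)
  set c : ℝ := (C.card : ℝ)
  have hyv : ∀ v, y v = if v ∈ C then n - c else -c := by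
    intro v
    by_cases hv : v ∈ C
    · rw [if_pos hv]; exact hy1 v hv
    · rw [if_neg hv]; exact hy2 v hv
  simp_rw [hyv]
  set f : V → V → ℝ := fun i j => if i ∈ C ∧ j ∉ C ∧ H.Adj i j then n^2 else 0 with hf
  have hterm : ∀ i j : V, (if H.Adj i j then
      ((if i ∈ C then n - c else -c) - (if j ∈ C then n - c else -c))^2 else 0)
      = f i j + f j i := by
    intro i j
    have hcomm : H.Adj j i ↔ H.Adj i j := H.adj_comm j i
    by_cases hadj : H.Adj i j <;> by_cases hi : i ∈ C <;> by_cases hj : j ∈ C <;>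
      simp [hf, hadj, hi, hj, hcomm] <;> ring
  have hrow : ∀ i : V, ∑ j : V, f i j
      = if i ∈ C then n^2 * (((H.neighborFinset i) \ C).card : ℝ) else 0 := by
    intro i
    by_cases hi : i ∈ C
    · rw [if_pos hi]
      have : ∀ j : V, f i j = if j ∈ (H.neighborFinset i) \ C then n^2 else 0 := by
        intro j
        simp only [hf, Finset.mem_sdiff, H.mem_neighborFinset]
        by_cases hadj : H.Adj i j <;> by_cases hj : j ∈ C <;> simp [hadj, hi, hj]
      simp_rw [this]
      rw [Finset.sum_ite_mem, Finset.univ_inter, Finset.sum_const, nsmul_eq_mul, mul_comm]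
    · rw [if_neg hi]
      apply Finset.sum_eq_zero
      intro j _
      simp [hf, hi]
  have hfsum : ∑ i : V, ∑ j : V, f i j ≤ n^2 * c * ((H.maxDegree : ℝ) + 1 - c) := by
    have hb : ∀ i ∈ C, (((H.neighborFinset i) \ C).card : ℝ) ≤ (H.maxDegree : ℝ) + 1 - c := by
      intro i hi
      have := sdiff_card_bound H C hclique i hi
      have hc := (Nat.cast_le (α := ℝ)).mpr this
      push_cast at hc
      simp only [c]
      linarith
    calc ∑ i : V, ∑ j : V, f i j
        = ∑ i ∈ C, n^2 * (((H.neighborFinset i) \ C).card : ℝ) := by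
          simp_rw [hrow]
          rw [Finset.sum_ite_mem, Finset.univ_inter]
      _ ≤ ∑ i ∈ C, n^2 * ((H.maxDegree : ℝ) + 1 - c) := by
          apply Finset.sum_le_sum
          intro i hi
          exact mul_le_mul_of_nonneg_left (hb i hi) (sq_nonneg n)
      _ = c * (n^2 * ((H.maxDegree : ℝ) + 1 - c)) := by
          rw [Finset.sum_const, nsmul_eq_mul]
      _ = n^2 * c * ((H.maxDegree : ℝ) + 1 - c) := by ring
  calc (∑ i : V, ∑ j : V, if H.Adj i j then
        ((if i ∈ C then n - c else -c) - (if j ∈ C then n - c else -c))^2 else 0)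
      = ∑ i : V, ∑ j : V, (f i j + f j i) := by
        refine Finset.sum_congr rfl fun i _ => Finset.sum_congr rfl fun j _ => hterm i j
    _ = (∑ i : V, ∑ j : V, f i j) + (∑ i : V, ∑ j : V, f j i) := by
        rw [← Finset.sum_add_distrib]
        refine Finset.sum_congr rfl fun i _ => ?_
        rw [← Finset.sum_add_distrib]
    _ = 2 * (∑ i : V, ∑ j : V, f i j) := by
        rw [Finset.sum_comm (f := fun i j => f j i)]
        ring
    _ ≤ 2 * (n^2 * c * ((H.maxDegree : ℝ) + 1 - c)) := by linarith
    _ = 2 * n^2 * c * ((H.maxDegree : ℝ) + 1 - c) := by ring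



end Aux

section Main
open Matrix Finset

/-- Let `H` be a connected graph of diameter two, order `n ≥ 2`, maximum
degree `Δ` and algebraic connectivity `μ`. Then `dim_s(H) ≥ ⌈n(n − Δ − 1)/(n − μ)⌉`. -/
theorem strongDim_ge_ceil_of_diam_two {V : Type*} [Fintype V] [DecidableEq V]
    (H : SimpleGraph V) [DecidableRel H.Adj] (hconn : H.Connected)
    (hn : 2 ≤ Fintype.card V) (hdiam : H.diam = 2) :
    ⌈(Fintype.card V : ℝ) * ((Fintype.card V : ℝ) - (H.maxDegree : ℝ) - 1) /
        ((Fintype.card V : ℝ) - algebraicConnectivity H)⌉ ≤ (strongDim H : ℤ) := by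
  classical
  have hNe : Nonempty V := Fintype.card_pos_iff.mp (by omega)
  obtain ⟨S, hS, hScard, hSlt⟩ := exists_min_srs H
  set C : Finset V := Sᶜ with hCdef
  have hclique : ∀ u ∈ C, ∀ v ∈ C, u ≠ v → H.Adj u v := compl_srs_clique H hconn hdiam S hS
  have hCcard : C.card = Fintype.card V - S.card := Finset.card_compl S
  have hCpos : 1 ≤ C.card := by omega
  set n : ℝ := (Fintype.card V : ℝ) with hndef
  set Δ : ℝ := (H.maxDegree : ℝ) with hΔdef
  set μ : ℝ := algebraicConnectivity H with hμdef
  set c : ℝ := (C.card : ℝ) with hcdef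
  set k : ℝ := (S.card : ℝ) with hkdef
  have hck : c = n - k := by
    rw [hcdef, hCcard, hndef, hkdef]
    have : S.card ≤ Fintype.card V := le_of_lt hSlt
    push_cast [Nat.cast_sub this]
    ring
  have hc1 : (1:ℝ) ≤ c := by
    rw [hcdef]; exact_mod_cast hCpos
  have hn2 : (2:ℝ) ≤ n := by
    rw [hndef]; exact_mod_cast hn
  have hΔn : Δ ≤ n - 1 := by
    have h2 : H.maxDegree + 1 ≤ Fintype.card V := H.maxDegree_lt_card_verts
    have h3 : ((H.maxDegree + 1 : ℕ) : ℝ) ≤ ((Fintype.card V : ℕ) : ℝ) := by exact_mod_cast h2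
    push_cast at h3
    rw [hΔdef, hndef]
    linarith
  set y : V → ℝ := fun v => if v ∈ C then n - c else -c with hydef
  have hy1 : ∀ v ∈ C, y v = n - c := fun v hv => by rw [hydef]; simp [hv]
  have hy2 : ∀ v ∉ C, y v = -c := fun v hv => by rw [hydef]; simp [hv]
  have hind : ∑ v : V, (if v ∈ C then (1:ℝ) else 0) = c := by
    rw [Finset.sum_ite_mem, Finset.univ_inter, Finset.sum_const, nsmul_eq_mul, mul_one, hcdef]
  have hsum0 : ∑ v : V, y v = 0 := by
    have hyind : ∀ v, y v = n * (if v ∈ C then (1:ℝ) else 0) - c := by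
      intro v
      by_cases hv : v ∈ C <;> simp [hydef, hv]
    simp_rw [hyind]
    rw [Finset.sum_sub_distrib, ← Finset.mul_sum, hind, Finset.sum_const, nsmul_eq_mul,
      Finset.card_univ, ← hndef]
    ring
  have hsumsq : ∑ v : V, y v ^ 2 = c * (n - c) * n := by
    have hyind : ∀ v, y v ^ 2 = (n^2 - 2*n*c) * (if v ∈ C then (1:ℝ) else 0) + c^2 := by
      intro v
      by_cases hv : v ∈ C <;> simp [hydef, hv] <;> ring
    simp_rw [hyind]
    rw [Finset.sum_add_distrib, ← Finset.mul_sum, hind, Finset.sum_const, nsmul_eq_mul,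
      Finset.card_univ, ← hndef]
    ring
  have hray := alg_conn_rayleigh H hn y hsum0
  have hquad : y ⬝ᵥ (H.lapMatrix ℝ *ᵥ y)
      = (∑ i : V, ∑ j : V, if H.Adj i j then (y i - y j)^2 else 0) / 2 := by
    have h := H.lapMatrix_toLinearMap₂' (R := ℝ) y
    rw [Matrix.toLinearMap₂'_apply'] at h
    exact h
  have hqle := quad_sum_le H C hclique y hy1 hy2
  have key : μ * (c * (n - c) * n) ≤ n^2 * c * (Δ + 1 - c) := by
    rw [← hsumsq]
    calc μ * ∑ v : V, y v ^ 2 ≤ y ⬝ᵥ (H.lapMatrix ℝ *ᵥ y) := hray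
      _ = (∑ i : V, ∑ j : V, if H.Adj i j then (y i - y j)^2 else 0) / 2 := hquad
      _ ≤ (2 * n^2 * c * (Δ + 1 - c)) / 2 := by linarith
      _ = n^2 * c * (Δ + 1 - c) := by ring
  have key2 : μ * (n - c) ≤ n * (Δ + 1 - c) := by
    have hcn : (0:ℝ) < c * n := by positivity
    have h1 : (μ * (n - c)) * (c * n) ≤ (n * (Δ + 1 - c)) * (c * n) := by nlinarith [key]
    exact le_of_mul_le_mul_right h1 hcn
  have key3 : n * (n - Δ - 1) ≤ (n - μ) * k := by
    rw [hck] at key2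
    nlinarith [key2]
  have hkval : (strongDim H : ℝ) = k := by rw [hkdef, hScard]
  have hk0 : (0:ℝ) ≤ k := by rw [hkdef]; exact Nat.cast_nonneg _
  rw [Int.ceil_le]
  push_cast
  rw [hkval]
  rcases lt_trichotomy (n - μ) 0 with hlt | heq | hgt
  · have hnum : (0:ℝ) ≤ n * (n - Δ - 1) := by nlinarith
    have hd : n * (n - Δ - 1) / (n - μ) ≤ 0 :=
      div_nonpos_of_nonneg_of_nonpos hnum hlt.le
    linarith
  · rw [heq, div_zero]
    exact hk0
  · rw [div_le_iff₀ hgt]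
    calc n * (n - Δ - 1) ≤ (n - μ) * k := key3
      _ = k * (n - μ) := by ring

end Main
end
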